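/- arXiv:0911.3374 — 2 statements merged into one kernel-verified Lean document; each statement's English description precedes it below -/
import Mathlib

section
/- Let f : ℤ → ℝ be a function and let a ∈ ℤ₊. Let μ > 0 be non-integer with m − 1 < μ < m, where m = ⌈μ⌉, and let p ∈ ℕ with μ > p. Assume additionally that ∇^k f(a) = 0 for k = p, p+1, ..., m−1. Then for all t ∈ ℕ with t ≥ a + m: ∇^p f(t) = (1/Γ(μ−p)) · Σ_{τ=a+1}^{t} (t−τ+1)^{↑(μ−p−1)} · ∇_{(a+1)*}^{μ} f(τ). -/
open Finset

/-- Backward (nabla) difference: `∇f(t) = f(t) - f(t-1)`. -/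
def nabla (f : ℤ → ℝ) : ℤ → ℝ := fun t => f t - f (t - 1)

/-- Rising factorial `t^{↑α} = Γ(t+α)/Γ(t)`. -/
noncomputable def risingFac (t α : ℝ) : ℝ := Real.Gamma (t + α) / Real.Gamma t

/-- The `ν`-th order nabla fractional sum `∇_a^{-ν} f (t) = Σ_{s=a}^{t} (t-s+1)^{↑(ν-1)}/Γ(ν) · f(s)`. -/
noncomputable def fracSum (ν : ℝ) (a : ℤ) (f : ℤ → ℝ) : ℤ → ℝ := fun t =>
  ∑ s ∈ Finset.Icc a t, risingFac ((t - s + 1 : ℤ) : ℝ) (ν - 1) / Real.Gamma ν * f s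

/-- Caputo-like nabla fractional difference `∇_{a*}^{μ} f = ∇_a^{-(m-μ)} (∇^m f)`, `m = ⌈μ⌉`. -/
noncomputable def caputoNabla (μ : ℝ) (a : ℤ) (f : ℤ → ℝ) : ℤ → ℝ :=
  fracSum ((⌈μ⌉₊ : ℝ) - μ) a (nabla^[⌈μ⌉₊] f)

/-! ### Auxiliary material -/

noncomputable def Acoef (n : ℕ) (x : ℝ) : ℝ := (Polynomial.eval x (ascPochhammer ℝ n)) / n.factorial

lemma Acoef_zero (x : ℝ) : Acoef 0 x = 1 := by simp [Acoef]

lemma Acoef_rec (n : ℕ) (x : ℝ) : (x + n) * Acoef n x = ((n:ℝ) + 1) * Acoef (n+1) x := by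
  have h : (ascPochhammer ℝ (n+1)).eval x = (ascPochhammer ℝ n).eval x * (x + n) := by
    rw [ascPochhammer_succ_right]; simp
  have hn : (n.factorial : ℝ) ≠ 0 := by positivity
  have hn1 : ((n+1).factorial : ℝ) = ((n:ℝ)+1) * n.factorial := by
    rw [Nat.factorial_succ]; push_cast; ring
  rw [Acoef, Acoef, h, hn1]
  field_simp

lemma Acoef_vandermonde (x y : ℝ) : ∀ n : ℕ,
    ∑ k ∈ range (n+1), Acoef k x * Acoef (n-k) y = Acoef n (x+y) := by
  intro n
  induction n with
  | zero => simp [Acoef_zero]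
  | succ n ih =>
    have hne : ((n:ℝ) + 1) ≠ 0 := by positivity
    have key : ((n:ℝ)+1) * ∑ k ∈ range (n+2), Acoef k x * Acoef (n+1-k) y
        = ((n:ℝ)+1) * Acoef (n+1) (x+y) := by
      rw [← Acoef_rec n (x+y), ← ih, Finset.mul_sum, Finset.mul_sum]
      have split : ∀ k ∈ range (n+2),
          ((n:ℝ)+1) * (Acoef k x * Acoef (n+1-k) y)
          = (k:ℝ) * Acoef k x * Acoef (n+1-k) y
            + Acoef k x * (((n+1-k : ℕ):ℝ) * Acoef (n+1-k) y) := by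
        intro k hk
        have hk' : k ≤ n + 1 := by simpa [Nat.lt_succ_iff] using hk
        have : ((n+1-k : ℕ):ℝ) = (n:ℝ) + 1 - k := by
          push_cast [Nat.cast_sub hk']; ring
        rw [this]; ring
      rw [Finset.sum_congr rfl split, Finset.sum_add_distrib]
      have t1 : ∑ k ∈ range (n+2), (k:ℝ) * Acoef k x * Acoef (n+1-k) y
          = ∑ k ∈ range (n+1), (x + k) * Acoef k x * Acoef (n-k) y := by
        rw [Finset.sum_range_succ' (fun k => (k:ℝ) * Acoef k x * Acoef (n+1-k) y) (n+1)]
        simp only [Nat.cast_zero, zero_mul, add_zero]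
        apply Finset.sum_congr rfl
        intro k hk
        have hk' : k ≤ n := by simpa [Nat.lt_succ_iff] using hk
        have h1 : n + 1 - (k+1) = n - k := by omega
        rw [h1]
        have := Acoef_rec k x
        push_cast
        rw [← this]
      have t2 : ∑ k ∈ range (n+2), Acoef k x * (((n+1-k : ℕ):ℝ) * Acoef (n+1-k) y)
          = ∑ k ∈ range (n+1), Acoef k x * ((y + ((n-k:ℕ):ℝ)) * Acoef (n-k) y) := by
        rw [Finset.sum_range_succ]
        simp only [Nat.sub_self, Nat.cast_zero, zero_mul, mul_zero, add_zero]
        apply Finset.sum_congr rfl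
        intro k hk
        have hk' : k ≤ n := by simpa [Nat.lt_succ_iff] using hk
        have h1 : n + 1 - k = (n - k) + 1 := by omega
        rw [h1]
        have := Acoef_rec (n-k) y
        push_cast
        rw [← this]
      rw [t1, t2, ← Finset.sum_add_distrib]
      apply Finset.sum_congr rfl
      intro k hk
      have hk' : k ≤ n := by simpa [Nat.lt_succ_iff] using hk
      have : ((n-k:ℕ):ℝ) = (n:ℝ) - k := by push_cast [Nat.cast_sub hk']; ring
      rw [this]; ring
    exact mul_left_cancel₀ hne key

lemma Gamma_add_nat (x : ℝ) (hx : 0 < x) (n : ℕ) :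
    Real.Gamma (x + n) = (ascPochhammer ℝ n).eval x * Real.Gamma x := by
  induction n with
  | zero => simp
  | succ n ih =>
    have hne : x + n ≠ 0 := by positivity
    have : x + ((n:ℝ)+1) = (x + n) + 1 := by ring
    rw [Nat.cast_add, Nat.cast_one, this, Real.Gamma_add_one hne, ih,
      ascPochhammer_succ_right]
    simp
    ring

lemma coeff_eq (n : ℕ) (x : ℝ) (hx : 0 < x) :
    Real.Gamma (((n:ℝ) + 1) + (x - 1)) / Real.Gamma ((n:ℝ)+1) = Acoef n x * Real.Gamma x := by
  have h1 : ((n:ℝ) + 1) + (x - 1) = x + n := by ring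
  have h2 : Real.Gamma ((n:ℝ)+1) = n.factorial := Real.Gamma_nat_eq_factorial n
  have h4 : (n.factorial : ℝ) ≠ 0 := by positivity
  rw [h1, h2, Gamma_add_nat x hx n, Acoef]
  field_simp

lemma coeff_eq' (u v : ℤ) (huv : u ≤ v) (x : ℝ) (hx : 0 < x) :
    risingFac ((v - u + 1 : ℤ) : ℝ) (x - 1) = Acoef (v-u).toNat x * Real.Gamma x := by
  have h0 : (((v-u).toNat : ℕ) : ℤ) = v - u := Int.toNat_of_nonneg (by omega)
  have h1 : ((v - u + 1 : ℤ):ℝ) = (((v-u).toNat : ℕ) : ℝ) + 1 := by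
    conv_lhs => rw [← h0]
    push_cast; ring
  rw [risingFac, h1]
  exact coeff_eq (v-u).toNat x hx

lemma Acoef_nat (n q : ℕ) (hq : 1 ≤ q) :
    Acoef n (q:ℝ) = ((n + q - 1).choose (q-1) : ℝ) := by
  have h1 : (ascPochhammer ℝ n).eval (q:ℝ) = (q.ascFactorial n : ℝ) := by
    rw [← ascPochhammer_nat_eq_ascFactorial]
    exact_mod_cast (ascPochhammer_eval_cast (S := ℝ) n q).symm
  have h2 : q.ascFactorial n = n.factorial * (q + n - 1).choose n :=
    Nat.ascFactorial_eq_factorial_mul_choose' q n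
  have h3 : (q + n - 1).choose n = (n + q - 1).choose (q - 1) := by
    rw [← Nat.choose_symm (show q - 1 ≤ n + q - 1 by omega)]
    congr 1 <;> omega
  rw [Acoef, h1, h2, h3]
  have : (n.factorial : ℝ) ≠ 0 := by positivity
  push_cast
  field_simp

lemma hockey (q N : ℕ) (hq : 1 ≤ q) :
    ∑ j ∈ range (N+1), ((j + q - 1).choose (q-1) : ℝ) = ((N + q).choose q : ℝ) := by
  obtain ⟨r, rfl⟩ : ∃ r, q = r + 1 := ⟨q - 1, by omega⟩
  induction N with
  | zero => simp
  | succ N ih =>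
    rw [Finset.sum_range_succ, ih]
    have e1 : N + 1 + (r+1) - 1 = N + (r+1) := by omega
    have e2 : N + 1 + (r+1) = (N + (r+1)) + 1 := by omega
    rw [e1, e2, Nat.choose_succ_succ']
    push_cast
    ring

lemma Icc_insert_top (a t : ℤ) (h : a ≤ t + 1) :
    Finset.Icc a (t+1) = insert (t+1) (Finset.Icc a t) := by
  ext x; simp only [Finset.mem_Icc, Finset.mem_insert]; omega

lemma sum_Icc_succ_top' (a t : ℤ) (h : a ≤ t + 1) (F : ℤ → ℝ) :
    ∑ s ∈ Finset.Icc a (t+1), F s = (∑ s ∈ Finset.Icc a t, F s) + F (t+1) := by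
  rw [Icc_insert_top a t h, Finset.sum_insert (by simp)]
  ring

lemma telescope (h : ℤ → ℝ) (a : ℤ) :
    ∀ t, a ≤ t → ∑ s ∈ Finset.Icc (a+1) t, nabla h s = h t - h a := by
  refine Int.le_induction ?_ ?_
  · rw [Finset.Icc_eq_empty (by omega)]; simp
  · intro t ht ih
    rw [sum_Icc_succ_top' _ _ (by omega), ih]
    simp only [nabla, add_sub_cancel_right]
    ring

lemma sum_swap_Icc (a t : ℤ) (F : ℤ → ℤ → ℝ) :
    ∑ τ ∈ Finset.Icc (a+1) t, ∑ s ∈ Finset.Icc (a+1) τ, F τ s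
      = ∑ s ∈ Finset.Icc (a+1) t, ∑ τ ∈ Finset.Icc s t, F τ s := by
  apply Finset.sum_comm'
  intro x y
  simp only [Finset.mem_Icc]
  omega

/-- Reindex top-down: `τ = t - j`. -/
lemma sum_Icc_reindex (s t : ℤ) (h : s ≤ t) (F : ℤ → ℝ) :
    ∑ τ ∈ Finset.Icc s t, F τ = ∑ j ∈ Finset.range ((t-s).toNat + 1), F (t - j) := by
  apply Finset.sum_nbij' (fun τ => (t - τ).toNat) (fun j => t - (j:ℤ))
  · intro τ hτ; simp only [Finset.mem_Icc] at hτ; simp only [Finset.mem_range]; omega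
  · intro j hj; simp only [Finset.mem_range] at hj; simp only [Finset.mem_Icc]; omega
  · intro τ hτ; simp only [Finset.mem_Icc] at hτ; omega
  · intro j hj; simp only [Finset.mem_range] at hj; omega
  · intro τ hτ; simp only [Finset.mem_Icc] at hτ
    congr 1; omega

/-- Reindex bottom-up: `τ = s + j`. -/
lemma sum_Icc_reindex' (s t : ℤ) (h : s ≤ t) (F : ℤ → ℝ) :
    ∑ τ ∈ Finset.Icc s t, F τ = ∑ j ∈ Finset.range ((t-s).toNat + 1), F (s + j) := by
  apply Finset.sum_nbij' (fun τ => (τ - s).toNat) (fun j => s + (j:ℤ))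
  · intro τ hτ; simp only [Finset.mem_Icc] at hτ; simp only [Finset.mem_range]; omega
  · intro j hj; simp only [Finset.mem_range] at hj; simp only [Finset.mem_Icc]; omega
  · intro τ hτ; simp only [Finset.mem_Icc] at hτ; omega
  · intro j hj; simp only [Finset.mem_range] at hj; omega
  · intro τ hτ; simp only [Finset.mem_Icc] at hτ
    congr 1; omega

/-- Integer-order discrete Taylor formula with vanishing initial conditions. -/
lemma taylor_int : ∀ q : ℕ, 1 ≤ q → ∀ h : ℤ → ℝ, ∀ a t : ℤ, a ≤ t →
    (∀ j, j < q → nabla^[j] h a = 0) →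
    ∑ s ∈ Finset.Icc (a+1) t, (((t-s).toNat + q - 1).choose (q-1) : ℝ) * nabla^[q] h s
      = h t := by
  intro q hq
  induction q, hq using Nat.le_induction with
  | base =>
    intro h a t hat h0
    have e : ∀ s ∈ Finset.Icc (a+1) t,
        (((t-s).toNat + 1 - 1).choose 0 : ℝ) * nabla^[1] h s = nabla h s := by
      intro s hs; simp
    rw [Finset.sum_congr rfl e, telescope h a t hat]
    have ha : h a = 0 := by simpa using h0 0 (by omega)
    rw [ha, sub_zero]
  | succ q hq ih =>
    intro h a t hat h0
    have hstep : ∀ s ∈ Finset.Icc (a+1) t,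
        (((t-s).toNat + (q+1) - 1).choose (q+1-1) : ℝ) * nabla^[q+1] h s
        = ∑ τ ∈ Finset.Icc s t,
            (((τ-s).toNat + q - 1).choose (q-1) : ℝ) * nabla^[q+1] h s := by
      intro s hs
      simp only [Finset.mem_Icc] at hs
      rw [← Finset.sum_mul]
      congr 1
      rw [sum_Icc_reindex' s t hs.2 (fun τ => (((τ-s).toNat + q - 1).choose (q-1) : ℝ))]
      have e : ∀ j ∈ Finset.range ((t-s).toNat+1),
          ((((s+(j:ℤ))-s).toNat + q - 1).choose (q-1) : ℝ)
            = ((j + q - 1).choose (q-1) : ℝ) := by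
        intro j hj
        congr 3
        omega
      rw [Finset.sum_congr rfl e, hockey q ((t-s).toNat) (by omega)]
      congr 2 <;> omega
    rw [Finset.sum_congr rfl hstep,
      ← sum_swap_Icc a t (fun τ s => (((τ-s).toNat + q - 1).choose (q-1) : ℝ) * nabla^[q+1] h s)]
    have inner : ∀ τ ∈ Finset.Icc (a+1) t,
        ∑ s ∈ Finset.Icc (a+1) τ, (((τ-s).toNat + q - 1).choose (q-1) : ℝ) * nabla^[q+1] h s
          = nabla h τ := by
      intro τ hτ
      simp only [Finset.mem_Icc] at hτ
      have key := ih (nabla h) a τ (by omega) (fun j hj => by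
        have := h0 (j+1) (by omega)
        rwa [Function.iterate_succ_apply] at this)
      rw [← key]
      apply Finset.sum_congr rfl
      intro s _
      simp only [Function.iterate_succ_apply]
    rw [Finset.sum_congr rfl inner, telescope h a t hat]
    have ha : h a = 0 := by simpa using h0 0 (by omega)
    rw [ha, sub_zero]

/-- Extended discrete backward fractional Taylor formula, vanishing differences case. -/
theorem discrete_nabla_fractional_taylor_extended_of_deriv_zero
    (f : ℤ → ℝ) (a : ℕ) (μ : ℝ) (hμ : 0 < μ) (hμint : ∀ n : ℤ, μ ≠ n)
    (m : ℕ) (hm : m = ⌈μ⌉₊) (hm1 : (m : ℝ) - 1 < μ) (hm2 : μ < m)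
    (p : ℕ) (hp : (p : ℝ) < μ)
    (hf0 : ∀ k, p ≤ k → k ≤ m - 1 → nabla^[k] f a = 0)
    (t : ℤ) (ht : (a : ℤ) + m ≤ t) :
    nabla^[p] f t =
      (1 / Real.Gamma (μ - p)) * ∑ τ ∈ Finset.Icc ((a : ℤ) + 1) t,
        risingFac ((t - τ + 1 : ℤ) : ℝ) (μ - p - 1) * caputoNabla μ ((a : ℤ) + 1) f τ := by
  have hm0 : 1 ≤ m := by
    have h : (0:ℝ) < (m:ℝ) := hμ.trans hm2
    exact_mod_cast Nat.cast_pos.mp h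
  have hpm : p < m := by
    have h : (p:ℝ) < (m:ℝ) := hp.trans hm2
    exact_mod_cast h
  set q := m - p with hqdef
  have hq1 : 1 ≤ q := by omega
  have hmq : m = q + p := by omega
  have hx1 : (0:ℝ) < μ - p := by linarith
  have hx2 : (0:ℝ) < (m:ℝ) - μ := by linarith
  have hat : (a:ℤ) ≤ t := by omega
  have hG1 : Real.Gamma (μ - p) ≠ 0 := (Real.Gamma_pos_of_pos hx1).ne'
  have hG2 : Real.Gamma ((m:ℝ) - μ) ≠ 0 := (Real.Gamma_pos_of_pos hx2).ne'
  have hqcast : μ - (p:ℝ) + ((m:ℝ) - μ) = (q:ℝ) := by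
    rw [hqdef, Nat.cast_sub hpm.le]; ring
  symm
  rw [Finset.mul_sum]
  simp only [caputoNabla, fracSum, ← hm]
  have e1 : ∀ τ ∈ Finset.Icc ((a:ℤ)+1) t,
      1 / Real.Gamma (μ - ↑p) * (risingFac ((t - τ + 1 : ℤ):ℝ) (μ - ↑p - 1)
        * ∑ s ∈ Finset.Icc ((a:ℤ)+1) τ,
            risingFac ((τ - s + 1 : ℤ):ℝ) ((m:ℝ) - μ - 1) / Real.Gamma ((m:ℝ) - μ)
              * nabla^[m] f s)
      = ∑ s ∈ Finset.Icc ((a:ℤ)+1) τ,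
          Acoef (t-τ).toNat (μ - ↑p) * (Acoef (τ-s).toNat ((m:ℝ) - μ) * nabla^[m] f s) := by
    intro τ hτ
    simp only [Finset.mem_Icc] at hτ
    have c1 : risingFac ((t - τ + 1 : ℤ):ℝ) (μ - ↑p - 1)
        = Acoef (t-τ).toNat (μ - ↑p) * Real.Gamma (μ - ↑p) := coeff_eq' τ t hτ.2 _ hx1
    have e2 : ∀ s ∈ Finset.Icc ((a:ℤ)+1) τ,
        risingFac ((τ - s + 1 : ℤ):ℝ) ((m:ℝ) - μ - 1) / Real.Gamma ((m:ℝ) - μ)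
            * nabla^[m] f s
          = Acoef (τ-s).toNat ((m:ℝ) - μ) * nabla^[m] f s := by
      intro s hs
      simp only [Finset.mem_Icc] at hs
      rw [coeff_eq' s τ hs.2 _ hx2, mul_div_cancel_right₀ _ hG2]
    rw [Finset.sum_congr rfl e2, c1, Finset.mul_sum, Finset.mul_sum]
    apply Finset.sum_congr rfl
    intro s hs
    field_simp
  rw [Finset.sum_congr rfl e1,
    sum_swap_Icc ((a:ℤ)) t
      (fun τ s => Acoef (t-τ).toNat (μ - ↑p) * (Acoef (τ-s).toNat ((m:ℝ) - μ) * nabla^[m] f s))]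
  have e3 : ∀ s ∈ Finset.Icc ((a:ℤ)+1) t,
      ∑ τ ∈ Finset.Icc s t,
          Acoef (t-τ).toNat (μ - ↑p) * (Acoef (τ-s).toNat ((m:ℝ) - μ) * nabla^[m] f s)
      = (((t-s).toNat + q - 1).choose (q-1) : ℝ) * nabla^[q] (nabla^[p] f) s := by
    intro s hs
    simp only [Finset.mem_Icc] at hs
    have step : ∀ τ ∈ Finset.Icc s t,
        Acoef (t-τ).toNat (μ - ↑p) * (Acoef (τ-s).toNat ((m:ℝ) - μ) * nabla^[m] f s)
        = (Acoef (t-τ).toNat (μ - ↑p) * Acoef (τ-s).toNat ((m:ℝ) - μ)) * nabla^[m] f s := by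
      intro τ hτ; ring
    rw [Finset.sum_congr rfl step, ← Finset.sum_mul]
    have conv : ∑ τ ∈ Finset.Icc s t,
        Acoef (t-τ).toNat (μ - ↑p) * Acoef (τ-s).toNat ((m:ℝ) - μ)
        = (((t-s).toNat + q - 1).choose (q-1) : ℝ) := by
      rw [sum_Icc_reindex s t hs.2
        (fun τ => Acoef (t-τ).toNat (μ - ↑p) * Acoef (τ-s).toNat ((m:ℝ) - μ))]
      have e4 : ∀ j ∈ Finset.range ((t-s).toNat+1),
          Acoef (t-(t-(j:ℤ))).toNat (μ - ↑p) * Acoef ((t-(j:ℤ))-s).toNat ((m:ℝ) - μ)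
          = Acoef j (μ - ↑p) * Acoef ((t-s).toNat - j) ((m:ℝ) - μ) := by
        intro j hj
        simp only [Finset.mem_range] at hj
        congr 2
        · omega
        · omega
      rw [Finset.sum_congr rfl e4, Acoef_vandermonde (μ - ↑p) ((m:ℝ) - μ) ((t-s).toNat),
        hqcast, Acoef_nat _ q hq1]
    rw [conv]
    congr 1
    rw [hmq, Function.iterate_add_apply]
  rw [Finset.sum_congr rfl e3]
  exact taylor_int q hq1 (nabla^[p] f) a t hat (fun j hj => by
    have := hf0 (j+p) (by omega) (by omega)
    rwa [Function.iterate_add_apply] at this)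
end

section
/- (Discrete nabla fractional Opial inequality.) Let μ > 2 be non-integer with m = ⌈μ⌉ ≥ 3, let p ∈ ℤ₊ with μ > p, and let a ∈ ℤ₊. Let f be a real valued function defined on {a−m+1, a−m+2, ...}, let t ∈ ℕ with t ≥ a + m, and assume ∇^k f(a) = 0 for k = p, ..., m−1. Let γ, δ > 1 with 1/γ + 1/δ = 1, let C(τ) > 0 for τ = a+1, ..., t, and D(t') ≥ 0 for t' = a+m, ..., t. Define θ(t', a, μ, p, C, γ) := ( Σ_{τ=a+1}^{t'} [ (t'−τ+1)^{↑(μ−p−1)} · C(τ)^{−1} ]^γ )^{1/γ} for t' ≥ a+m; g(t') := Σ_{τ=a+1}^{t'} C(τ)^δ |∇_{(a+1)*}^{μ} f(τ)|^δ for t' ≥ a+1; G(t, a, m, g) := 2( g(t)² − g(a+m−1)² ) + ( g(t−1)² − g(a+m−2)² )/2 + 2[ g(t)·g(t−1) − g(a+m−1)·g(a+m−2) ]; and K(t) := (1/Γ(μ−p)) · ( Σ_{t'=a+m}^{t} [ D(t') · C(t')^{−1} · θ(t', a, μ, p, C, γ) ]^γ )^{1/γ}. Then Σ_{t'=a+m}^{t}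 D(t') · |∇^p f(t')| · |∇_{(a+1)*}^{μ} f(t')| ≤ K(t) · ( G(t, a, m, g) )^{1/δ}. -/
open Finset

/-- Rising factorial helper: `Prf x n = x(x+1)...(x+n-1)`. -/
def Prf (x : ℝ) : ℕ → ℝ
  | 0 => 1
  | n+1 => Prf x n * (x + n)
lemma gamma_Prf {x : ℝ} (hx : 0 < x) (n : ℕ) :
    Real.Gamma (x + n) = Real.Gamma x * Prf x n := by
  induction n with
  | zero => simp [Prf]
  | succ n ih =>
    have h1 : x + (n+1 : ℕ) = (x + n) + 1 := by push_cast; ring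
    have h2 : x + (n:ℝ) ≠ 0 := by positivity
    rw [h1, Real.Gamma_add_one h2, ih, Prf]; ring
lemma Prf_pos {x : ℝ} (hx : 0 < x) (n : ℕ) : 0 < Prf x n := by
  induction n with
  | zero => norm_num [Prf]
  | succ n ih => exact mul_pos ih (by positivity)
lemma Prf_vandermonde (x y : ℝ) (n : ℕ) :
    ∑ j ∈ range (n+1), (n.choose j : ℝ) * Prf x j * Prf y (n-j) = Prf (x+y) n := by
  induction n with
  | zero => simp [Prf]
  | succ n ih =>
    have split : ∀ j ∈ range (n+1),
        ((n+1).choose (j+1) : ℝ) * Prf x (j+1) * Prf y (n-j)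
          = (n.choose j : ℝ) * (Prf x j * (x+j)) * Prf y (n-j)
            + (n.choose (j+1) : ℝ) * Prf x (j+1) * Prf y (n-j) := by
      intro j hj
      rw [Nat.choose_succ_succ' n j]
      push_cast
      rw [Prf]
      ring
    rw [Finset.sum_range_succ' _ (n+1)]
    simp only [Nat.choose_zero_right, Nat.cast_one, Nat.sub_zero, Nat.succ_sub_succ_eq_sub]
    rw [Finset.sum_congr rfl split, Finset.sum_add_distrib]
    have e2 : ∑ j ∈ range (n+1), (n.choose (j+1) : ℝ) * Prf x (j+1) * Prf y (n-j)
        + (1:ℝ) * Prf x 0 * Prf y (n+1)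
        = ∑ j ∈ range (n+1), (n.choose j : ℝ) * Prf x j * (Prf y (n-j) * (y + (n-j:ℕ))) := by
      have := Finset.sum_range_succ' (fun j => (n.choose j : ℝ) * Prf x j * Prf y (n+1-j)) (n+1)
      rw [Finset.sum_range_succ _ (n+1)] at this
      simp only [Nat.choose_succ_self, Nat.cast_zero, zero_mul, add_zero, Nat.sub_zero] at this
      calc ∑ j ∈ range (n+1), (n.choose (j+1) : ℝ) * Prf x (j+1) * Prf y (n-j)
          + (1:ℝ) * Prf x 0 * Prf y (n+1)
          = ∑ j ∈ range (n+1), (n.choose (j+1) : ℝ) * Prf x (j+1) * Prf y (n+1-(j+1))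
            + (n.choose 0 : ℝ) * Prf x 0 * Prf y (n+1-0) := by
            simp [Nat.succ_sub_succ_eq_sub]
        _ = ∑ j ∈ range (n+1), (n.choose j : ℝ) * Prf x j * Prf y (n+1-j) := this.symm
        _ = ∑ j ∈ range (n+1), (n.choose j : ℝ) * Prf x j * (Prf y (n-j) * (y + (n-j:ℕ))) := by
            refine Finset.sum_congr rfl fun j hj => ?_
            have hjn : j ≤ n := Nat.lt_succ_iff.mp (mem_range.mp hj)
            rw [show n + 1 - j = (n - j) + 1 by omega, Prf]
    rw [add_assoc, e2, ← Finset.sum_add_distrib]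
    have e3 : ∀ j ∈ range (n+1),
        (n.choose j : ℝ) * (Prf x j * (x+j)) * Prf y (n-j)
          + (n.choose j : ℝ) * Prf x j * (Prf y (n-j) * (y + (n-j:ℕ)))
        = ((n.choose j : ℝ) * Prf x j * Prf y (n-j)) * (x + y + n) := by
      intro j hj
      have hjn : j ≤ n := Nat.lt_succ_iff.mp (mem_range.mp hj)
      have : ((n - j : ℕ) : ℝ) = (n : ℝ) - j := by
        rw [Nat.cast_sub hjn]
      rw [this]; ring
    rw [Finset.sum_congr rfl e3, ← Finset.sum_mul, ih, Prf]
lemma Prf_conv (x y : ℝ) (n : ℕ) :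
    ∑ j ∈ range (n+1), (Prf x j / j.factorial) * (Prf y (n-j) / (n-j).factorial)
      = Prf (x+y) n / n.factorial := by
  rw [eq_div_iff (by positivity), Finset.sum_mul, ← Prf_vandermonde x y n]
  refine Finset.sum_congr rfl fun j hj => ?_
  have hjn : j ≤ n := Nat.lt_succ_iff.mp (mem_range.mp hj)
  have hfact : ((n.choose j : ℕ) : ℝ) * j.factorial * (n-j).factorial = n.factorial := by
    exact_mod_cast congrArg (Nat.cast (R := ℝ)) (Nat.choose_mul_factorial_mul_factorial hjn)
  rw [← hfact]
  have h1 : (j.factorial : ℝ) ≠ 0 := by positivity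
  have h2 : ((n-j).factorial : ℝ) ≠ 0 := by positivity
  field_simp
lemma weight_eq {ν : ℝ} (hν : 0 < ν) (n : ℕ) :
    risingFac ((n : ℝ) + 1) (ν - 1) / Real.Gamma ν = Prf ν n / n.factorial := by
  have h1 : (n : ℝ) + 1 + (ν - 1) = ν + n := by ring
  rw [risingFac, h1, gamma_Prf hν n, Real.Gamma_nat_eq_factorial]
  rw [mul_div_assoc, mul_comm, mul_div_assoc, div_self (Real.Gamma_pos_of_pos hν).ne', mul_one]
lemma icc_reindex (b t : ℤ) (hbt : b ≤ t) (F : ℤ → ℝ) :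
    ∑ s ∈ Finset.Icc b t, F s = ∑ j ∈ range ((t-b).toNat + 1), F (b + j) := by
  refine Finset.sum_nbij' (fun s => (s - b).toNat) (fun j => b + (j:ℤ)) ?_ ?_ ?_ ?_ ?_ <;>
    intro u hu <;> simp only [mem_Icc, mem_range] at * <;> try omega
  congr 1
  omega
lemma fracSum_eq_Prf {ν : ℝ} (hν : 0 < ν) (b : ℤ) (g : ℤ → ℝ) (t : ℤ) :
    fracSum ν b g t = ∑ s ∈ Finset.Icc b t, Prf ν (t-s).toNat / (t-s).toNat.factorial * g s := by
  refine Finset.sum_congr rfl fun s hs => ?_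
  rw [mem_Icc] at hs
  have h1 : ((t - s + 1 : ℤ) : ℝ) = ((t-s).toNat : ℝ) + 1 := by
    have : (t - s + 1 : ℤ) = ((t-s).toNat : ℤ) + 1 := by omega
    rw [this]; push_cast; ring
  rw [h1, weight_eq hν]
lemma fracSum_comp {ν σ : ℝ} (hν : 0 < ν) (hσ : 0 < σ) (b : ℤ) (g : ℤ → ℝ) (t : ℤ) :
    fracSum ν b (fracSum σ b g) t = fracSum (ν + σ) b g t := by
  rw [fracSum_eq_Prf hν, fracSum_eq_Prf (by positivity)]
  have step1 : ∀ s ∈ Finset.Icc b t,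
      Prf ν (t-s).toNat / (t-s).toNat.factorial * fracSum σ b g s
      = ∑ τ ∈ Finset.Icc b s, (Prf ν (t-s).toNat / (t-s).toNat.factorial)
          * (Prf σ (s-τ).toNat / (s-τ).toNat.factorial) * g τ := by
    intro s hs
    rw [fracSum_eq_Prf hσ, Finset.mul_sum]
    exact Finset.sum_congr rfl fun τ hτ => by ring
  rw [Finset.sum_congr rfl step1]
  rw [Finset.sum_comm' (t' := Finset.Icc b t) (s' := fun τ => Finset.Icc τ t)
    (fun s τ => by simp only [mem_Icc]; omega)]
  refine Finset.sum_congr rfl fun τ hτ => ?_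
  rw [mem_Icc] at hτ
  rw [← Finset.sum_mul]
  congr 1
  rw [icc_reindex τ t hτ.2]
  have key : ∀ j ∈ range ((t-τ).toNat + 1),
      (Prf ν (t-(τ+j)).toNat / (t-(τ+j)).toNat.factorial) * (Prf σ ((τ+j)-τ).toNat / ((τ+j)-τ).toNat.factorial)
      = (Prf σ (j : ℕ) / (j:ℕ).factorial) * (Prf ν ((t-τ).toNat - j) / ((t-τ).toNat - j).factorial) := by
    intro j hj
    rw [mem_range] at hj
    have h1 : ((τ+j)-τ : ℤ).toNat = j := by omega
    have h2 : (t-(τ+j) : ℤ).toNat = (t-τ).toNat - j := by omega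
    rw [h1, h2]; ring
  rw [Finset.sum_congr rfl key, Prf_conv σ ν, add_comm σ ν]
lemma telescope_Icc (b : ℤ) (h : ℤ → ℝ) : ∀ t, b ≤ t →
    ∑ s ∈ Finset.Icc (b+1) t, (h s - h (s-1)) = h t - h b := by
  refine Int.le_induction ?_ ?_
  · rw [show Finset.Icc (b+1) b = ∅ from Finset.Icc_eq_empty (by omega)]
    simp
  · intro t hbt ih
    have h1 : Finset.Icc (b+1) (t+1) = insert (t+1) (Finset.Icc (b+1) t) := by
      ext x; simp only [Finset.mem_Icc, Finset.mem_insert]; omega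
    rw [h1, Finset.sum_insert (by simp only [Finset.mem_Icc]; omega), ih]
    have ht1 : t + 1 - 1 = t := by ring
    rw [ht1]; ring
lemma Prf_one (n : ℕ) : Prf 1 n = n.factorial := by
  induction n with
  | zero => simp [Prf]
  | succ n ih => rw [Prf, ih]; push_cast [Nat.factorial_succ]; ring
lemma fracSum_one (b : ℤ) (g : ℤ → ℝ) (t : ℤ) : fracSum 1 b g t = ∑ s ∈ Finset.Icc b t, g s := by
  rw [fracSum_eq_Prf one_pos]
  refine Finset.sum_congr rfl fun s hs => ?_
  rw [Prf_one, div_self (by positivity), one_mul]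
lemma fracSum_nabla : ∀ (k : ℕ), 1 ≤ k → ∀ (h : ℤ → ℝ) (b : ℤ),
    (∀ i < k, nabla^[i] h b = 0) → ∀ t, b ≤ t →
    fracSum (k : ℝ) (b+1) (nabla^[k] h) t = h t := by
  intro k
  induction k with
  | zero => omega
  | succ k ih =>
    intro _ h b hinit t hbt
    rcases Nat.eq_zero_or_pos k with hk0 | hk1
    · subst hk0
      rw [Nat.cast_one, fracSum_one]
      have : ∀ s ∈ Finset.Icc (b+1) t, nabla^[1] h s = h s - h (s-1) := by
        intro s _; simp [nabla]
      have hb0 : h b = 0 := by simpa using hinit 0 (by omega)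
      rw [Finset.sum_congr rfl this, telescope_Icc b h t hbt, hb0]
      ring
    · have hcast : ((k+1 : ℕ) : ℝ) = 1 + (k : ℝ) := by push_cast; ring
      have hGe : (nabla^[k+1] h) = nabla^[k] (nabla h) := Function.iterate_succ_apply nabla k h
      rw [hcast, hGe, ← fracSum_comp one_pos (by positivity : (0:ℝ) < (k:ℝ)) (b+1) _ t,
        fracSum_one]
      have : ∀ s ∈ Finset.Icc (b+1) t, fracSum (k : ℝ) (b+1) (nabla^[k] (nabla h)) s
          = nabla h s := by
        intro s hs
        rw [Finset.mem_Icc] at hs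
        refine ih hk1 (nabla h) b (fun i hi => ?_) s (by omega)
        have : nabla^[i] (nabla h) = nabla^[i+1] h := (Function.iterate_succ_apply nabla i h).symm
        rw [this]
        exact hinit (i+1) (by omega)
      rw [Finset.sum_congr rfl this]
      have : ∀ s ∈ Finset.Icc (b+1) t, nabla h s = h s - h (s-1) := fun s _ => rfl
      have hb0 : h b = 0 := by simpa using hinit 0 (by omega)
      rw [Finset.sum_congr rfl this, telescope_Icc b h t hbt, hb0]
      ring
lemma caputo_repr (μ : ℝ) (m p : ℕ) (hm : m = ⌈μ⌉₊) (hpμ : (p:ℝ) < μ) (hμm : μ < m)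
    (b : ℤ) (f : ℤ → ℝ) (hf0 : ∀ k, p ≤ k → k ≤ m - 1 → nabla^[k] f b = 0)
    (t : ℤ) (ht : b ≤ t) :
    fracSum (μ - p) (b+1) (caputoNabla μ (b+1) f) t = nabla^[p] f t := by
  have hpm : p < m := by have := hpμ.trans hμm; exact_mod_cast this
  have h1 : caputoNabla μ (b+1) f = fracSum ((m : ℝ) - μ) (b+1) (nabla^[m] f) := by
    rw [caputoNabla, ← hm]
  rw [h1, fracSum_comp (by linarith) (by linarith) (b+1) _ t]
  have h2 : μ - p + ((m:ℝ) - μ) = ((m - p : ℕ) : ℝ) := by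
    rw [Nat.cast_sub hpm.le]; ring
  have h3 : nabla^[m] f = nabla^[m-p] (nabla^[p] f) := by
    rw [← Function.iterate_add_apply, Nat.sub_add_cancel hpm.le]
  rw [h2, h3]
  refine fracSum_nabla (m-p) (by omega) (nabla^[p] f) b (fun i hi => ?_) t ht
  rw [← Function.iterate_add_apply]
  exact hf0 (i+p) (by omega) (by omega)

/-- Discrete nabla fractional Opial inequality. -/
theorem discrete_nabla_fractional_opial
    (μ : ℝ) (hμ2 : 2 < μ) (hμint : ∀ n : ℤ, μ ≠ n)
    (m : ℕ) (hm : m = ⌈μ⌉₊) (hm3 : 3 ≤ m)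
    (p : ℕ) (hp : (p : ℝ) < μ) (a : ℕ)
    (f : ℤ → ℝ) (t : ℤ) (ht : (a : ℤ) + m ≤ t)
    (hf0 : ∀ k, p ≤ k → k ≤ m - 1 → nabla^[k] f a = 0)
    (γ δ : ℝ) (hγ : 1 < γ) (hδ : 1 < δ) (hγδ : 1 / γ + 1 / δ = 1)
    (C D : ℤ → ℝ)
    (hC : ∀ τ ∈ Finset.Icc ((a : ℤ) + 1) t, 0 < C τ)
    (hD : ∀ t' ∈ Finset.Icc ((a : ℤ) + m) t, 0 ≤ D t') :
    let θ : ℤ → ℝ := fun t' =>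
      (∑ τ ∈ Finset.Icc ((a : ℤ) + 1) t',
        (risingFac ((t' - τ + 1 : ℤ) : ℝ) (μ - p - 1) * (C τ)⁻¹) ^ γ) ^ (1 / γ)
    let g : ℤ → ℝ := fun t' =>
      ∑ τ ∈ Finset.Icc ((a : ℤ) + 1) t',
        C τ ^ δ * |caputoNabla μ ((a : ℤ) + 1) f τ| ^ δ
    let G : ℝ :=
      2 * (g t ^ 2 - g ((a : ℤ) + m - 1) ^ 2) +
        (g (t - 1) ^ 2 - g ((a : ℤ) + m - 2) ^ 2) / 2 +
        2 * (g t * g (t - 1) - g ((a : ℤ) + m - 1) * g ((a : ℤ) + m - 2))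
    let K : ℝ := (1 / Real.Gamma (μ - p)) *
      (∑ t' ∈ Finset.Icc ((a : ℤ) + m) t, (D t' * (C t')⁻¹ * θ t') ^ γ) ^ (1 / γ)
    ∑ t' ∈ Finset.Icc ((a : ℤ) + m) t,
        D t' * |nabla^[p] f t'| * |caputoNabla μ ((a : ℤ) + 1) f t'| ≤
      K * G ^ (1 / δ) := by
  intro θ g G K
  have hγ0 : (0:ℝ) < γ := by linarith
  have hδ0 : (0:ℝ) < δ := by linarith
  have hpq : Real.HolderConjugate γ δ := Real.holderConjugate_iff.mpr ⟨hγ, by simpa [one_div] using hγδ⟩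
  have hμm : μ < (m:ℝ) := by
    have h1 : μ ≤ (m:ℝ) := by rw [hm]; exact Nat.le_ceil μ
    have h2 : μ ≠ (m:ℝ) := by
      have := hμint (m : ℤ); push_cast at this; exact this
    exact lt_of_le_of_ne h1 h2
  have hΓ : 0 < Real.Gamma (μ - ↑p) := Real.Gamma_pos_of_pos (by linarith)
  set cap := caputoNabla μ ((a:ℤ)+1) f with hcapdef
  -- weight positivity
  have hW_pos : ∀ t' τ : ℤ, τ ≤ t' → 0 < risingFac ((t' - τ + 1 : ℤ) : ℝ) (μ - ↑p - 1) := by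
    intro t' τ h
    have hge : (1:ℝ) ≤ ((t' - τ + 1 : ℤ):ℝ) := by exact_mod_cast (by omega : (1:ℤ) ≤ t' - τ + 1)
    rw [risingFac]
    exact div_pos (Real.Gamma_pos_of_pos (by linarith)) (Real.Gamma_pos_of_pos (by linarith))
  -- facts about g
  have htermnn : ∀ τ ∈ Finset.Icc ((a:ℤ)+1) t, 0 ≤ C τ ^ δ * |cap τ| ^ δ := fun τ hτ =>
    mul_nonneg (Real.rpow_nonneg (hC τ hτ).le _) (Real.rpow_nonneg (abs_nonneg _) _)
  have hg_mono : ∀ r s : ℤ, r ≤ s → s ≤ t → g r ≤ g s := by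
    intro r s hrs hst
    refine Finset.sum_le_sum_of_subset_of_nonneg (Finset.Icc_subset_Icc_right hrs) ?_
    intro τ hτ _
    refine htermnn τ ?_
    rw [Finset.mem_Icc] at *
    omega
  have hg_nonneg : ∀ r : ℤ, r ≤ t → 0 ≤ g r := by
    intro r hr
    refine Finset.sum_nonneg fun τ hτ => htermnn τ ?_
    rw [Finset.mem_Icc] at *
    omega
  have hSg : ∀ t' ∈ Finset.Icc ((a:ℤ)+m) t, g t' - g (t'-1) = C t' ^ δ * |cap t'| ^ δ := by
    intro t' ht'
    rw [Finset.mem_Icc] at ht'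
    have hins : Finset.Icc ((a:ℤ)+1) t' = insert t' (Finset.Icc ((a:ℤ)+1) (t'-1)) := by
      ext x; simp only [Finset.mem_Icc, Finset.mem_insert]; omega
    show (∑ τ ∈ Finset.Icc ((a:ℤ)+1) t', C τ ^ δ * |cap τ| ^ δ)
      - (∑ τ ∈ Finset.Icc ((a:ℤ)+1) (t'-1), C τ ^ δ * |cap τ| ^ δ) = C t' ^ δ * |cap t'| ^ δ
    rw [hins, Finset.sum_insert (by simp only [Finset.mem_Icc]; omega)]
    ring
  have hθnn : ∀ t' : ℤ, t' ≤ t → 0 ≤ θ t' := by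
    intro t' ht'
    refine Real.rpow_nonneg (Finset.sum_nonneg fun τ hτ => Real.rpow_nonneg ?_ _) _
    rw [Finset.mem_Icc] at hτ
    exact mul_nonneg (hW_pos t' τ hτ.2).le (inv_nonneg.mpr (hC τ (by rw [Finset.mem_Icc]; omega)).le)
  -- main per-term bound
  have hmain : ∀ t' ∈ Finset.Icc ((a:ℤ)+m) t,
      D t' * |nabla^[p] f t'| * |cap t'| ≤
        (Real.Gamma (μ - ↑p))⁻¹ * ((D t' * (C t')⁻¹ * θ t')
          * (g t' * (g t' - g (t'-1))) ^ (1/δ)) := by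
    intro t' ht'
    have ht'm := Finset.mem_Icc.mp ht'
    have hCt' : 0 < C t' := hC t' (by rw [Finset.mem_Icc]; omega)
    have hDt' : 0 ≤ D t' := hD t' ht'
    -- representation
    have hrepr : nabla^[p] f t' = ∑ τ ∈ Finset.Icc ((a:ℤ)+1) t',
        risingFac ((t' - τ + 1 : ℤ):ℝ) (μ - ↑p - 1) / Real.Gamma (μ - ↑p) * cap τ := by
      rw [← caputo_repr μ m p hm hp hμm (a:ℤ) f hf0 t' (by omega)]
      rfl
    have hA : |nabla^[p] f t'| ≤ (Real.Gamma (μ - ↑p))⁻¹ *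
        ∑ τ ∈ Finset.Icc ((a:ℤ)+1) t',
          risingFac ((t' - τ + 1 : ℤ):ℝ) (μ - ↑p - 1) * |cap τ| := by
      rw [hrepr]
      refine (Finset.abs_sum_le_sum_abs _ _).trans (le_of_eq ?_)
      rw [Finset.mul_sum]
      refine Finset.sum_congr rfl fun τ hτ => ?_
      rw [Finset.mem_Icc] at hτ
      rw [abs_mul, abs_of_nonneg (div_nonneg (hW_pos t' τ hτ.2).le hΓ.le), div_eq_mul_inv]
      ring
    have hB : ∑ τ ∈ Finset.Icc ((a:ℤ)+1) t',
        risingFac ((t' - τ + 1 : ℤ):ℝ) (μ - ↑p - 1) * |cap τ|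
        ≤ θ t' * g t' ^ (1/δ) := by
      have hsplit : ∀ τ ∈ Finset.Icc ((a:ℤ)+1) t',
          risingFac ((t' - τ + 1 : ℤ):ℝ) (μ - ↑p - 1) * |cap τ|
          = (risingFac ((t' - τ + 1 : ℤ):ℝ) (μ - ↑p - 1) * (C τ)⁻¹) * (C τ * |cap τ|) := by
        intro τ hτ
        rw [Finset.mem_Icc] at hτ
        have : C τ ≠ 0 := (hC τ (by rw [Finset.mem_Icc]; omega)).ne'
        field_simp
      rw [Finset.sum_congr rfl hsplit]
      refine (Real.inner_le_Lp_mul_Lq (Finset.Icc ((a:ℤ)+1) t') _ _ hpq).trans (le_of_eq ?_)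
      congr 1
      · refine congrArg (· ^ (1/γ)) (Finset.sum_congr rfl fun τ hτ => ?_)
        rw [Finset.mem_Icc] at hτ
        rw [abs_of_nonneg (mul_nonneg (hW_pos t' τ hτ.2).le
          (inv_nonneg.mpr (hC τ (by rw [Finset.mem_Icc]; omega)).le))]
      · refine congrArg (· ^ (1/δ)) (Finset.sum_congr rfl fun τ hτ => ?_)
        rw [Finset.mem_Icc] at hτ
        have hCτ : 0 < C τ := hC τ (by rw [Finset.mem_Icc]; omega)
        rw [abs_of_nonneg (mul_nonneg hCτ.le (abs_nonneg _)),
          Real.mul_rpow hCτ.le (abs_nonneg _)]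
    have hCcap : C t' * |cap t'| = (g t' - g (t'-1)) ^ (1/δ) := by
      rw [hSg t' ht', ← Real.mul_rpow hCt'.le (abs_nonneg _), one_div,
        Real.rpow_rpow_inv (mul_nonneg hCt'.le (abs_nonneg _)) (by linarith)]
    have hg0 : 0 ≤ g t' := hg_nonneg t' (by omega)
    have hSg0 : 0 ≤ g t' - g (t'-1) := by
      have := hg_mono (t'-1) t' (by omega) (by omega)
      linarith
    calc D t' * |nabla^[p] f t'| * |cap t'|
        ≤ D t' * ((Real.Gamma (μ - ↑p))⁻¹ * (θ t' * g t' ^ (1/δ))) * |cap t'| := by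
          refine mul_le_mul_of_nonneg_right (mul_le_mul_of_nonneg_left
            (hA.trans (mul_le_mul_of_nonneg_left hB (inv_nonneg.mpr hΓ.le))) hDt') (abs_nonneg _)
      _ = (Real.Gamma (μ - ↑p))⁻¹ * ((D t' * (C t')⁻¹ * θ t')
            * (g t' ^ (1/δ) * (C t' * |cap t'|))) := by
          field_simp
      _ = (Real.Gamma (μ - ↑p))⁻¹ * ((D t' * (C t')⁻¹ * θ t')
            * (g t' * (g t' - g (t'-1))) ^ (1/δ)) := by
          rw [hCcap, ← Real.mul_rpow hg0 hSg0]
  -- sum up and apply outer Hölder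
  have houter : ∑ t' ∈ Finset.Icc ((a:ℤ)+m) t, D t' * |nabla^[p] f t'| * |cap t'|
      ≤ K * (∑ t' ∈ Finset.Icc ((a:ℤ)+m) t, g t' * (g t' - g (t'-1))) ^ (1/δ) := by
    refine (Finset.sum_le_sum hmain).trans ?_
    rw [← Finset.mul_sum]
    have hH := Real.inner_le_Lp_mul_Lq (Finset.Icc ((a:ℤ)+m) t)
      (fun t' => D t' * (C t')⁻¹ * θ t')
      (fun t' => (g t' * (g t' - g (t'-1))) ^ (1/δ)) hpq
    have hKrw : K = (Real.Gamma (μ - ↑p))⁻¹ *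
        (∑ t' ∈ Finset.Icc ((a:ℤ)+m) t,
          |D t' * (C t')⁻¹ * θ t'| ^ γ) ^ (1/γ) := by
      show (1 / Real.Gamma (μ - ↑p)) * _ = _
      rw [one_div]
      congr 2
      refine Finset.sum_congr rfl fun t' ht' => ?_
      rw [Finset.mem_Icc] at ht'
      rw [abs_of_nonneg (mul_nonneg (mul_nonneg (hD t' (by rw [Finset.mem_Icc]; omega))
        (inv_nonneg.mpr (hC t' (by rw [Finset.mem_Icc]; omega)).le)) (hθnn t' (by omega)))]
    have hsum2 : ∑ t' ∈ Finset.Icc ((a:ℤ)+m) t,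
        |(g t' * (g t' - g (t'-1))) ^ (1/δ)| ^ δ
        = ∑ t' ∈ Finset.Icc ((a:ℤ)+m) t, g t' * (g t' - g (t'-1)) := by
      refine Finset.sum_congr rfl fun t' ht' => ?_
      rw [Finset.mem_Icc] at ht'
      have hgSg : 0 ≤ g t' * (g t' - g (t'-1)) := by
        refine mul_nonneg (hg_nonneg t' (by omega)) ?_
        have := hg_mono (t'-1) t' (by omega) (by omega)
        linarith
      rw [abs_of_nonneg (Real.rpow_nonneg hgSg _), one_div,
        Real.rpow_inv_rpow hgSg (by linarith)]
    rw [hsum2] at hH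
    rw [hKrw, mul_assoc]
    exact mul_le_mul_of_nonneg_left hH (inv_nonneg.mpr hΓ.le)
  refine houter.trans ?_
  -- final: S ≤ G
  have hg1t : g ((a:ℤ)+m-1) ≤ g t := hg_mono _ _ (by omega) le_rfl
  have hg21 : g ((a:ℤ)+m-2) ≤ g ((a:ℤ)+m-1) := hg_mono _ _ (by omega) (by omega)
  have hg1t1 : g ((a:ℤ)+m-1) ≤ g (t-1) := hg_mono _ _ (by omega) (by omega)
  have hgt1t : g (t-1) ≤ g t := hg_mono _ _ (by omega) le_rfl
  have hg2nn : 0 ≤ g ((a:ℤ)+m-2) := hg_nonneg _ (by omega)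
  have hSle : ∑ t' ∈ Finset.Icc ((a:ℤ)+m) t, g t' * (g t' - g (t'-1))
      ≤ g t ^ 2 - g ((a:ℤ)+m-1) ^ 2 := by
    have step : ∑ t' ∈ Finset.Icc ((a:ℤ)+m) t, g t' * (g t' - g (t'-1))
        ≤ ∑ t' ∈ Finset.Icc ((a:ℤ)+m) t, ((fun r => g r ^ 2) t' - (fun r => g r ^ 2) (t'-1)) := by
      refine Finset.sum_le_sum fun t' ht' => ?_
      rw [Finset.mem_Icc] at ht'
      have h1 : 0 ≤ g (t'-1) := hg_nonneg _ (by omega)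
      have h2 : g (t'-1) ≤ g t' := hg_mono _ _ (by omega) (by omega)
      simp only []
      nlinarith
    refine step.trans (le_of_eq ?_)
    have := telescope_Icc ((a:ℤ)+m-1) (fun r => g r ^ 2) t (by omega)
    rw [show ((a:ℤ)+m-1)+1 = (a:ℤ)+m by ring] at this
    exact this
  have hSnn : 0 ≤ ∑ t' ∈ Finset.Icc ((a:ℤ)+m) t, g t' * (g t' - g (t'-1)) := by
    refine Finset.sum_nonneg fun t' ht' => ?_
    rw [Finset.mem_Icc] at ht'
    refine mul_nonneg (hg_nonneg _ (by omega)) ?_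
    have := hg_mono (t'-1) t' (by omega) (by omega)
    linarith
  have hGge : ∑ t' ∈ Finset.Icc ((a:ℤ)+m) t, g t' * (g t' - g (t'-1)) ≤ G := by
    have hGdef : G = 2 * (g t ^ 2 - g ((a:ℤ)+m-1) ^ 2) +
        (g (t-1) ^ 2 - g ((a:ℤ)+m-2) ^ 2) / 2 +
        2 * (g t * g (t-1) - g ((a:ℤ)+m-1) * g ((a:ℤ)+m-2)) := rfl
    rw [hGdef]
    nlinarith [hSle]
  have hKnn : 0 ≤ K := by
    refine mul_nonneg (by positivity) (Real.rpow_nonneg ?_ _)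
    refine Finset.sum_nonneg fun t' ht' => Real.rpow_nonneg ?_ _
    rw [Finset.mem_Icc] at ht'
    exact mul_nonneg (mul_nonneg (hD t' (by rw [Finset.mem_Icc]; omega))
      (inv_nonneg.mpr (hC t' (by rw [Finset.mem_Icc]; omega)).le)) (hθnn t' (by omega))
  exact mul_le_mul_of_nonneg_left (Real.rpow_le_rpow hSnn hGge (by positivity)) hKnn
end
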